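/- For every y₀ > 0 there exist constants A, C > 0 such that for all integers n ≥ 1, all real y ≥ y₀, and all s ∈ [3/4, 1], one has |(πny/6)^{−1/4}·W(πny/6, s)| ≤ C·n^A·e^{−πny/12}, and moreover the derivative in s satisfies |∂_s[(πny/6)^{−1/4}·W(πny/6, s)]| ≤ C·n^A·e^{−πny/12}. -/

import Mathlib

open Real MeasureTheory

/-- The Whittaker function `W_{1/4, s-1/2}(y)` for `y > 0`, given by the integral
representation `W(y,s) = (y^s e^{−y/2}/Γ(s−1/4)) ∫_0^∞ e^{−yt} t^{s−5/4} (1+t)^{s−3/4} dt`. -/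
noncomputable def Wfun (y s : ℝ) : ℝ :=
  y ^ s * Real.exp (-y / 2) / Real.Gamma (s - 1 / 4) *
    ∫ t in Set.Ioi (0 : ℝ), Real.exp (-y * t) * t ^ (s - 5 / 4) * (1 + t) ^ (s - 3 / 4)

open Set

lemma aux_hasDerivAt_rpow_shift {c : ℝ} (hc : 0 < c) (d s : ℝ) :
    HasDerivAt (fun s : ℝ => c ^ (s - d)) (c ^ (s - d) * Real.log c) s := by
  have h1 : HasDerivAt (fun s : ℝ => s - d) 1 s := (hasDerivAt_id s).sub_const d
  have h2 := (Real.hasStrictDerivAt_const_rpow hc (s - d)).hasDerivAt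
  simpa [Function.comp_def] using h2.comp s h1

lemma aux_hasDerivAt_integrand {x u : ℝ} (hx : 0 < x) (hu : 0 < u) (s : ℝ) :
    HasDerivAt (fun s' : ℝ => Real.exp (-u) * u ^ (s' - 5/4) * (1 + u/x) ^ (s' - 3/4))
      (Real.exp (-u) * u ^ (s - 5/4) * (1 + u/x) ^ (s - 3/4) *
        (Real.log u + Real.log (1 + u/x))) s := by
  have hb : (0:ℝ) < 1 + u/x := by positivity
  have h1 := (aux_hasDerivAt_rpow_shift hu (5/4) s).const_mul (Real.exp (-u))
  have h2 := aux_hasDerivAt_rpow_shift hb (3/4) s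
  have := h1.mul h2
  refine this.congr_deriv ?_
  ring

lemma aux_log_abs_le {u : ℝ} (hu : 0 < u) : |Real.log u| ≤ u + 8 * u ^ (-(1/8) : ℝ) := by
  have hpow : (0:ℝ) < u ^ (-(1/8) : ℝ) := Real.rpow_pos_of_pos hu _
  rcases le_total 1 u with h1 | h1
  · have : Real.log u ≤ u - 1 := Real.log_le_sub_one_of_pos hu
    have hl : 0 ≤ Real.log u := Real.log_nonneg h1
    rw [abs_of_nonneg hl]; nlinarith
  · have hl : Real.log u ≤ 0 := Real.log_nonpos hu.le h1
    rw [abs_of_nonpos hl]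
    have h2 : Real.log (u ^ (-(1/8) : ℝ)) = -(1/8) * Real.log u := Real.log_rpow hu _
    have h3 : Real.log (u ^ (-(1/8) : ℝ)) ≤ u ^ (-(1/8) : ℝ) - 1 :=
      Real.log_le_sub_one_of_pos hpow
    nlinarith

lemma aux_key_bound {x₀ x u a b : ℝ} (hx₀ : 0 < x₀) (hx : x₀ ≤ x) (hu : 0 < u)
    (ha : -(5/8) ≤ a) (ha' : a ≤ -(1/8)) (hb' : b ≤ 3/8) :
    u ^ a * (1 + u / x) ^ b * (1 + |Real.log u + Real.log (1 + u / x)|)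
      ≤ ((1 + 1/x₀) * (10 + 1/x₀)) * (u ^ (-(3/4) : ℝ) + u ^ (2 : ℝ)) := by
  have hxpos : 0 < x := lt_of_lt_of_le hx₀ hx
  have hux : 0 < u / x := by positivity
  have hux₀ : 0 < u / x₀ := by positivity
  have hbase : (0:ℝ) < 1 + u / x := by positivity
  have hbase1 : (1:ℝ) ≤ 1 + u / x := by linarith
  have hbase1' : (1:ℝ) ≤ 1 + u / x₀ := by linarith
  have hdiv : u / x ≤ u / x₀ := div_le_div_of_nonneg_left hu.le hx₀ hx
  have h1 : (1 + u / x) ^ b ≤ 1 + u / x₀ := by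
    calc (1 + u / x) ^ b ≤ (1 + u / x) ^ (3/8 : ℝ) :=
          Real.rpow_le_rpow_of_exponent_le hbase1 hb'
      _ ≤ (1 + u / x₀) ^ (3/8 : ℝ) :=
          Real.rpow_le_rpow hbase.le (by linarith) (by norm_num)
      _ ≤ (1 + u / x₀) ^ (1 : ℝ) :=
          Real.rpow_le_rpow_of_exponent_le hbase1' (by norm_num)
      _ = 1 + u / x₀ := Real.rpow_one _
  have hlog2 : Real.log (1 + u / x) ≤ u / x₀ := by
    have := Real.log_le_sub_one_of_pos hbase
    linarith
  have hlog2' : 0 ≤ Real.log (1 + u / x) := Real.log_nonneg hbase1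
  have h2 : 1 + |Real.log u + Real.log (1 + u / x)|
      ≤ 1 + u + 8 * u ^ (-(1/8) : ℝ) + u / x₀ := by
    have := abs_add_le (Real.log u) (Real.log (1 + u / x))
    have h3 := aux_log_abs_le hu
    have h4 : |Real.log (1 + u / x)| = Real.log (1 + u / x) := abs_of_nonneg hlog2'
    linarith
  have hK0 : (0:ℝ) < 1 + 1/x₀ := by positivity
  have hK1 : (0:ℝ) < 10 + 1/x₀ := by positivity
  have hupos : ∀ c : ℝ, (0:ℝ) < u ^ c := fun c => Real.rpow_pos_of_pos hu c
  have step : u ^ a * (1 + u / x) ^ b * (1 + |Real.log u + Real.log (1 + u / x)|)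
      ≤ u ^ a * (1 + u / x₀) * (1 + u + 8 * u ^ (-(1/8) : ℝ) + u / x₀) := by
    have hnn : 0 ≤ 1 + |Real.log u + Real.log (1 + u / x)| := by positivity
    have hprod1 : u ^ a * (1 + u / x) ^ b ≤ u ^ a * (1 + u / x₀) :=
      mul_le_mul_of_nonneg_left h1 (hupos a).le
    calc u ^ a * (1 + u / x) ^ b * (1 + |Real.log u + Real.log (1 + u / x)|)
        ≤ u ^ a * (1 + u / x₀) * (1 + |Real.log u + Real.log (1 + u / x)|) :=
          mul_le_mul_of_nonneg_right hprod1 hnn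
      _ ≤ u ^ a * (1 + u / x₀) * (1 + u + 8 * u ^ (-(1/8) : ℝ) + u / x₀) := by
          apply mul_le_mul_of_nonneg_left h2 (by positivity)
  refine step.trans ?_
  rcases le_total u 1 with h1u | h1u
  · -- u ≤ 1
    have e1 : u ^ a ≤ u ^ (-(5/8) : ℝ) := Real.rpow_le_rpow_of_exponent_ge hu h1u ha
    have e2 : 1 + u / x₀ ≤ 1 + 1/x₀ := by
      have : u / x₀ ≤ 1 / x₀ := by gcongr
      linarith
    have hm1 : (1:ℝ) ≤ u ^ (-(1/8) : ℝ) :=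
      Real.one_le_rpow_of_pos_of_le_one_of_nonpos hu h1u (by norm_num)
    have e3 : 1 + u + 8 * u ^ (-(1/8) : ℝ) + u / x₀
        ≤ (10 + 1/x₀) * u ^ (-(1/8) : ℝ) := by
      have hd : u / x₀ ≤ u ^ (-(1/8) : ℝ) / x₀ := by gcongr; linarith
      have : u ≤ u ^ (-(1/8) : ℝ) := by linarith
      have hexp : (1/x₀) * u ^ (-(1/8) : ℝ) = u ^ (-(1/8) : ℝ) / x₀ := by ring
      nlinarith [hupos (-(1/8):ℝ)]
    have hmul : u ^ (-(5/8):ℝ) * u ^ (-(1/8):ℝ) = u ^ (-(3/4):ℝ) := by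
      rw [← Real.rpow_add hu]; norm_num
    calc u ^ a * (1 + u / x₀) * (1 + u + 8 * u ^ (-(1/8) : ℝ) + u / x₀)
        ≤ u ^ (-(5/8):ℝ) * (1 + 1/x₀) * ((10 + 1/x₀) * u ^ (-(1/8) : ℝ)) := by
          apply mul_le_mul (mul_le_mul e1 e2 (by positivity) (hupos _).le) e3
            (by positivity) (by positivity)
      _ = ((1 + 1/x₀) * (10 + 1/x₀)) * u ^ (-(3/4):ℝ) := by
          linear_combination (1 + 1/x₀) * (10 + 1/x₀) * hmul
      _ ≤ ((1 + 1/x₀) * (10 + 1/x₀)) * (u ^ (-(3/4) : ℝ) + u ^ (2 : ℝ)) := by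
          have : (0:ℝ) ≤ ((1 + 1/x₀) * (10 + 1/x₀)) * u ^ (2:ℝ) := by positivity
          linarith
  · -- 1 ≤ u
    have e1 : u ^ a ≤ 1 := Real.rpow_le_one_of_one_le_of_nonpos h1u (by linarith)
    have e2 : 1 + u / x₀ ≤ (1 + 1/x₀) * u := by
      have : (1 + 1/x₀) * u = u + u / x₀ := by ring
      linarith
    have hm1 : u ^ (-(1/8) : ℝ) ≤ 1 :=
      Real.rpow_le_one_of_one_le_of_nonpos h1u (by norm_num)
    have e3 : 1 + u + 8 * u ^ (-(1/8) : ℝ) + u / x₀ ≤ (10 + 1/x₀) * u := by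
      have : (10 + 1/x₀) * u = 10 * u + u / x₀ := by ring
      linarith
    have hsq : u ^ (2:ℝ) = u * u := by
      rw [show (2:ℝ) = ((2:ℕ):ℝ) by norm_num, Real.rpow_natCast]; ring
    calc u ^ a * (1 + u / x₀) * (1 + u + 8 * u ^ (-(1/8) : ℝ) + u / x₀)
        ≤ 1 * ((1 + 1/x₀) * u) * ((10 + 1/x₀) * u) := by
          apply mul_le_mul (mul_le_mul e1 e2 (by positivity) (by norm_num)) e3
            (by positivity) (by positivity)
      _ = ((1 + 1/x₀) * (10 + 1/x₀)) * (u * u) := by ring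
      _ ≤ ((1 + 1/x₀) * (10 + 1/x₀)) * (u ^ (-(3/4) : ℝ) + u ^ (2 : ℝ)) := by
          rw [hsq]
          have : (0:ℝ) ≤ ((1 + 1/x₀) * (10 + 1/x₀)) * u ^ (-(3/4):ℝ) := by positivity
          linarith

noncomputable def bfun (x₀ u : ℝ) : ℝ :=
  ((1 + 1/x₀) * (10 + 1/x₀)) * (Real.exp (-u) * (u ^ (-(3/4) : ℝ) + u ^ (2 : ℝ)))

lemma bfun_integrable (x₀ : ℝ) : IntegrableOn (bfun x₀) (Ioi 0) := by
  have h1 := Real.GammaIntegral_convergent (show (0:ℝ) < 1/4 by norm_num)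
  have h2 := Real.GammaIntegral_convergent (show (0:ℝ) < 3 by norm_num)
  have h1' : IntegrableOn (fun u : ℝ => Real.exp (-u) * u ^ (-(3/4) : ℝ)) (Ioi 0) := by
    have : ((1:ℝ)/4 - 1) = (-(3/4) : ℝ) := by norm_num
    rwa [this] at h1
  have h2' : IntegrableOn (fun u : ℝ => Real.exp (-u) * u ^ (2 : ℝ)) (Ioi 0) := by
    have : ((3:ℝ) - 1) = (2 : ℝ) := by norm_num
    rwa [this] at h2
  have hint := (h1'.add h2').const_mul ((1 + 1/x₀) * (10 + 1/x₀))
  have heq : bfun x₀ = fun u : ℝ => ((1 + 1/x₀) * (10 + 1/x₀)) *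
      ((fun u : ℝ => Real.exp (-u) * u ^ (-(3/4) : ℝ)) u
        + (fun u : ℝ => Real.exp (-u) * u ^ (2 : ℝ)) u) := by
    funext u; unfold bfun; ring
  rw [heq]; exact hint

lemma integrand_contOn {x : ℝ} (hx : 0 < x) (s : ℝ) :
    ContinuousOn (fun u : ℝ => Real.exp (-u) * u ^ (s - 5/4) * (1 + u/x) ^ (s - 3/4))
      (Ioi 0) := by
  intro u hu
  have hu' : (0:ℝ) < u := hu
  have hb : (0:ℝ) < 1 + u/x := by positivity
  apply ContinuousAt.continuousWithinAt
  have c1 : ContinuousAt (fun u : ℝ => Real.exp (-u)) u := by fun_prop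
  have c2 : ContinuousAt (fun u : ℝ => u ^ (s - 5/4)) u :=
    Real.continuousAt_rpow_const u _ (Or.inl hu'.ne')
  have cb : ContinuousAt (fun u : ℝ => 1 + u / x) u := by fun_prop
  have c3 : ContinuousAt (fun u : ℝ => (1 + u/x) ^ (s - 3/4)) u :=
    cb.rpow_const (Or.inl hb.ne')
  exact (c1.mul c2).mul c3

lemma integrand_log_contOn {x : ℝ} (hx : 0 < x) (s : ℝ) :
    ContinuousOn (fun u : ℝ => Real.exp (-u) * u ^ (s - 5/4) * (1 + u/x) ^ (s - 3/4) *
      (Real.log u + Real.log (1 + u/x))) (Ioi 0) := by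
  apply (integrand_contOn hx s).mul
  intro u hu
  have hu' : (0:ℝ) < u := hu
  have hb : (0:ℝ) < 1 + u/x := by positivity
  apply ContinuousAt.continuousWithinAt
  exact (Real.continuousAt_log hu'.ne').add (ContinuousAt.log (by fun_prop) hb.ne')

noncomputable def Jfun (x s : ℝ) : ℝ :=
  ∫ u in Ioi (0:ℝ), Real.exp (-u) * u ^ (s - 5/4) * (1 + u/x) ^ (s - 3/4)

noncomputable def Jlog (x s : ℝ) : ℝ :=
  ∫ u in Ioi (0:ℝ), Real.exp (-u) * u ^ (s - 5/4) * (1 + u/x) ^ (s - 3/4) *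
    (Real.log u + Real.log (1 + u/x))


lemma Wfun_repr {x : ℝ} (hx : 0 < x) (s : ℝ) :
    x ^ (-(1/4) : ℝ) * Wfun x s
      = Real.exp (-x/2) * ((Real.Gamma (s - 1/4))⁻¹ * Jfun x s) := by
  have key : (∫ t in Ioi (0:ℝ), Real.exp (-x * t) * t ^ (s - 5/4) * (1 + t) ^ (s - 3/4))
      = x⁻¹ * (x ^ (-(s - 5/4)) * Jfun x s) := by
    have h1 : ∀ t : ℝ, Real.exp (-x * t) * t ^ (s - 5/4) * (1 + t) ^ (s - 3/4)
        = (fun u : ℝ => Real.exp (-u) * (u/x) ^ (s - 5/4) * (1 + u/x) ^ (s - 3/4)) (x * t) := by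
      intro t
      simp only
      rw [mul_div_cancel_left₀ _ hx.ne']
      ring_nf
    calc (∫ t in Ioi (0:ℝ), Real.exp (-x * t) * t ^ (s - 5/4) * (1 + t) ^ (s - 3/4))
        = ∫ t in Ioi (0:ℝ),
            (fun u : ℝ => Real.exp (-u) * (u/x) ^ (s - 5/4) * (1 + u/x) ^ (s - 3/4)) (x * t) := by
          congr 1; funext t; exact h1 t
      _ = x⁻¹ • ∫ u in Ioi (x * 0), Real.exp (-u) * (u/x) ^ (s - 5/4) * (1 + u/x) ^ (s - 3/4) :=
          integral_comp_mul_left_Ioi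
            (fun u : ℝ => Real.exp (-u) * (u/x) ^ (s - 5/4) * (1 + u/x) ^ (s - 3/4)) 0 hx
      _ = x⁻¹ * ∫ u in Ioi (0:ℝ), Real.exp (-u) * (u/x) ^ (s - 5/4) * (1 + u/x) ^ (s - 3/4) := by
          rw [mul_zero]; simp [smul_eq_mul]
      _ = x⁻¹ * (x ^ (-(s - 5/4)) * Jfun x s) := by
          congr 1
          rw [show x ^ (-(s - 5/4)) * Jfun x s
              = ∫ u in Ioi (0:ℝ), x ^ (-(s - 5/4)) *
                  (Real.exp (-u) * u ^ (s - 5/4) * (1 + u/x) ^ (s - 3/4)) from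
            (integral_const_mul _ _).symm]
          apply setIntegral_congr_fun measurableSet_Ioi
          intro u hu
          have hu' : (0:ℝ) < u := hu
          dsimp only
          rw [Real.div_rpow hu'.le hx.le, Real.rpow_neg hx.le]
          field_simp
  unfold Wfun
  rw [key]
  have hxs : x ^ (-(1/4) : ℝ) * x ^ s * x⁻¹ * x ^ (-(s - 5/4)) = 1 := by
    rw [← Real.rpow_neg_one x, ← Real.rpow_add hx, ← Real.rpow_add hx, ← Real.rpow_add hx,
      show (-(1/4) + s + -1 + -(s - 5/4) : ℝ) = 0 by ring, Real.rpow_zero]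
  rw [div_eq_mul_inv (x ^ s * Real.exp (-x/2)) (Real.Gamma (s - 1/4))]
  rw [show x ^ (-(1/4):ℝ) * (x ^ s * Real.exp (-x/2) * (Real.Gamma (s - 1/4))⁻¹ *
      (x⁻¹ * (x ^ (-(s - 5/4)) * Jfun x s)))
    = (x ^ (-(1/4):ℝ) * x ^ s * x⁻¹ * x ^ (-(s - 5/4))) *
      (Real.exp (-x/2) * ((Real.Gamma (s - 1/4))⁻¹ * Jfun x s)) from by ring, hxs, one_mul]

lemma aux_dom {x₀ x u : ℝ} (hx₀ : 0 < x₀) (hx : x₀ ≤ x) (hu : 0 < u) {a b : ℝ}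
    (ha : -(5/8) ≤ a) (ha' : a ≤ -(1/8)) (hb' : b ≤ 3/8) :
    Real.exp (-u) * u ^ a * (1 + u/x) ^ b * (1 + |Real.log u + Real.log (1 + u/x)|)
      ≤ bfun x₀ u := by
  have hkey := aux_key_bound hx₀ hx hu ha ha' hb'
  have he : (0:ℝ) < Real.exp (-u) := Real.exp_pos _
  calc Real.exp (-u) * u ^ a * (1 + u/x) ^ b * (1 + |Real.log u + Real.log (1 + u/x)|)
      = Real.exp (-u) * (u ^ a * (1 + u/x) ^ b * (1 + |Real.log u + Real.log (1 + u/x)|)) := by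
        ring
    _ ≤ Real.exp (-u) * (((1 + 1/x₀) * (10 + 1/x₀)) * (u ^ (-(3/4) : ℝ) + u ^ (2 : ℝ))) :=
        mul_le_mul_of_nonneg_left hkey he.le
    _ = bfun x₀ u := by unfold bfun; ring

lemma aux_dom_val {x₀ x u : ℝ} (hx₀ : 0 < x₀) (hx : x₀ ≤ x) (hu : 0 < u) {a b : ℝ}
    (ha : -(5/8) ≤ a) (ha' : a ≤ -(1/8)) (hb' : b ≤ 3/8) :
    ‖Real.exp (-u) * u ^ a * (1 + u/x) ^ b‖ ≤ bfun x₀ u := by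
  have hxpos : 0 < x := lt_of_lt_of_le hx₀ hx
  have hb : (0:ℝ) < 1 + u/x := by positivity
  have hP : (0:ℝ) < Real.exp (-u) * u ^ a * (1 + u/x) ^ b := by positivity
  rw [Real.norm_eq_abs, abs_of_pos hP]
  have h1 : (1:ℝ) ≤ 1 + |Real.log u + Real.log (1 + u/x)| := by
    linarith [abs_nonneg (Real.log u + Real.log (1 + u/x))]
  calc Real.exp (-u) * u ^ a * (1 + u/x) ^ b
      ≤ Real.exp (-u) * u ^ a * (1 + u/x) ^ b *
          (1 + |Real.log u + Real.log (1 + u/x)|) := le_mul_of_one_le_right hP.le h1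
    _ ≤ bfun x₀ u := aux_dom hx₀ hx hu ha ha' hb'

lemma aux_dom_log {x₀ x u : ℝ} (hx₀ : 0 < x₀) (hx : x₀ ≤ x) (hu : 0 < u) {a b : ℝ}
    (ha : -(5/8) ≤ a) (ha' : a ≤ -(1/8)) (hb' : b ≤ 3/8) :
    ‖Real.exp (-u) * u ^ a * (1 + u/x) ^ b * (Real.log u + Real.log (1 + u/x))‖
      ≤ bfun x₀ u := by
  have hxpos : 0 < x := lt_of_lt_of_le hx₀ hx
  have hb : (0:ℝ) < 1 + u/x := by positivity
  have hP : (0:ℝ) < Real.exp (-u) * u ^ a * (1 + u/x) ^ b := by positivity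
  rw [Real.norm_eq_abs, abs_mul, abs_of_pos hP]
  calc Real.exp (-u) * u ^ a * (1 + u/x) ^ b * |Real.log u + Real.log (1 + u/x)|
      ≤ Real.exp (-u) * u ^ a * (1 + u/x) ^ b *
          (1 + |Real.log u + Real.log (1 + u/x)|) := by
        have hl : |Real.log u + Real.log (1 + u/x)|
            ≤ 1 + |Real.log u + Real.log (1 + u/x)| := by
          linarith [abs_nonneg (Real.log u + Real.log (1 + u/x))]
        exact mul_le_mul_of_nonneg_left hl hP.le
    _ ≤ bfun x₀ u := aux_dom hx₀ hx hu ha ha' hb'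

set_option maxHeartbeats 1000000 in
lemma aux_J {x₀ x s : ℝ} (hx₀ : 0 < x₀) (hx : x₀ ≤ x) (hs : s ∈ Icc (3/4:ℝ) 1) :
    HasDerivAt (fun s' => Jfun x s') (Jlog x s) s ∧
    |Jfun x s| ≤ (∫ u in Ioi (0:ℝ), bfun x₀ u) ∧
    |Jlog x s| ≤ (∫ u in Ioi (0:ℝ), bfun x₀ u) := by
  obtain ⟨hs1, hs2⟩ := hs
  have hxpos : 0 < x := lt_of_lt_of_le hx₀ hx
  have hmeas : ∀ s' : ℝ, AEStronglyMeasurable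
      (fun u : ℝ => Real.exp (-u) * u ^ (s' - 5/4) * (1 + u/x) ^ (s' - 3/4))
      (volume.restrict (Ioi 0)) := fun s' =>
    (integrand_contOn hxpos s').aestronglyMeasurable measurableSet_Ioi
  have hmeaslog : ∀ s' : ℝ, AEStronglyMeasurable
      (fun u : ℝ => Real.exp (-u) * u ^ (s' - 5/4) * (1 + u/x) ^ (s' - 3/4) *
        (Real.log u + Real.log (1 + u/x)))
      (volume.restrict (Ioi 0)) := fun s' =>
    (integrand_log_contOn hxpos s').aestronglyMeasurable measurableSet_Ioi
  have hrange : ∀ s' ∈ Metric.ball s (1/8 : ℝ),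
      -(5/8) ≤ s' - 5/4 ∧ s' - 5/4 ≤ -(1/8) ∧ s' - 3/4 ≤ 3/8 := by
    intro s' hs'
    rw [Metric.mem_ball, Real.dist_eq, abs_sub_lt_iff] at hs'
    refine ⟨by linarith [hs'.1, hs'.2], by linarith [hs'.1, hs'.2], by linarith [hs'.1, hs'.2]⟩
  have hrs : -(5/8) ≤ s - 5/4 ∧ s - 5/4 ≤ -(1/8) ∧ s - 3/4 ≤ 3/8 :=
    ⟨by linarith, by linarith, by linarith⟩
  have hboundV : ∀ᵐ u ∂(volume.restrict (Ioi (0:ℝ))),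
      ‖Real.exp (-u) * u ^ (s - 5/4) * (1 + u/x) ^ (s - 3/4)‖ ≤ bfun x₀ u := by
    refine (ae_restrict_iff' measurableSet_Ioi).mpr (ae_of_all _ fun u hu => ?_)
    exact aux_dom_val hx₀ hx hu hrs.1 hrs.2.1 hrs.2.2
  have hFint : Integrable
      (fun u : ℝ => Real.exp (-u) * u ^ (s - 5/4) * (1 + u/x) ^ (s - 3/4))
      (volume.restrict (Ioi 0)) := by
    refine Integrable.mono (bfun_integrable x₀) (hmeas s) ?_
    exact hboundV.mono fun u hu => hu.trans (le_abs_self _)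
  have hbound : ∀ᵐ u ∂(volume.restrict (Ioi (0:ℝ))), ∀ s' ∈ Metric.ball s (1/8 : ℝ),
      ‖Real.exp (-u) * u ^ (s' - 5/4) * (1 + u/x) ^ (s' - 3/4) *
        (Real.log u + Real.log (1 + u/x))‖ ≤ bfun x₀ u := by
    refine (ae_restrict_iff' measurableSet_Ioi).mpr (ae_of_all _ fun u hu s' hs' => ?_)
    obtain ⟨h1, h2, h3⟩ := hrange s' hs'
    exact aux_dom_log hx₀ hx hu h1 h2 h3
  have hdiff : ∀ᵐ u ∂(volume.restrict (Ioi (0:ℝ))), ∀ s' ∈ Metric.ball s (1/8 : ℝ),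
      HasDerivAt (fun s'' => Real.exp (-u) * u ^ (s'' - 5/4) * (1 + u/x) ^ (s'' - 3/4))
        (Real.exp (-u) * u ^ (s' - 5/4) * (1 + u/x) ^ (s' - 3/4) *
          (Real.log u + Real.log (1 + u/x))) s' := by
    refine (ae_restrict_iff' measurableSet_Ioi).mpr (ae_of_all _ fun u hu s' _ => ?_)
    exact aux_hasDerivAt_integrand hxpos hu s'
  have hmain := hasDerivAt_integral_of_dominated_loc_of_deriv_le (Metric.ball_mem_nhds s (by norm_num : (0:ℝ) < 1/8))
    (Filter.Eventually.of_forall hmeas) hFint (hmeaslog s) hbound (bfun_integrable x₀) hdiff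
  refine ⟨hmain.2, ?_, ?_⟩
  · rw [← Real.norm_eq_abs]
    exact norm_integral_le_of_norm_le (bfun_integrable x₀) hboundV
  · rw [← Real.norm_eq_abs]
    refine norm_integral_le_of_norm_le (bfun_integrable x₀) ?_
    refine (ae_restrict_iff' measurableSet_Ioi).mpr (ae_of_all _ fun u hu => ?_)
    exact aux_dom_log hx₀ hx hu hrs.1 hrs.2.1 hrs.2.2

lemma aux_gamma_hasDerivAt {s : ℝ} (hs : (0:ℝ) < s) :
    HasDerivAt Real.Gamma ((deriv Complex.Gamma (s : ℂ)).re) s := by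
  have hne : ∀ m : ℕ, (s : ℂ) ≠ -(m : ℂ) := by
    intro m h
    have h2 : ((s : ℂ)).re = (-(m : ℂ)).re := by rw [h]
    simp only [Complex.ofReal_re, Complex.neg_re, Complex.natCast_re] at h2
    have := Nat.cast_nonneg (α := ℝ) m
    linarith
  have hC : HasDerivAt Complex.Gamma (deriv Complex.Gamma (s : ℂ)) (s : ℂ) :=
    (Complex.differentiableAt_Gamma _ hne).hasDerivAt
  have hR := hC.real_of_complex
  have heq : Real.Gamma = fun t : ℝ => (Complex.Gamma (t : ℂ)).re := by
    funext t
    rw [Complex.Gamma_ofReal]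
    exact (Complex.ofReal_re _).symm
  rw [heq]
  exact hR

lemma aux_gammaDeriv_continuousOn :
    ContinuousOn (fun t : ℝ => (deriv Complex.Gamma (t : ℂ)).re)
      (Icc (1/2 : ℝ) (3/4)) := by
  have hU : IsOpen {z : ℂ | 0 < z.re} := isOpen_lt continuous_const Complex.continuous_re
  have hd : DifferentiableOn ℂ Complex.Gamma {z : ℂ | 0 < z.re} := by
    intro z hz
    refine (Complex.differentiableAt_Gamma z ?_).differentiableWithinAt
    intro m h
    rw [h] at hz
    simp only [mem_setOf_eq, Complex.neg_re, Complex.natCast_re] at hz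
    have := Nat.cast_nonneg (α := ℝ) m
    linarith
  have hc : ContinuousOn (deriv Complex.Gamma) {z : ℂ | 0 < z.re} :=
    ((hd.analyticOnNhd hU).deriv).continuousOn
  have hmap : MapsTo (fun t : ℝ => (t : ℂ)) (Icc (1/2 : ℝ) (3/4)) {z : ℂ | 0 < z.re} := by
    intro t ht
    simp only [mem_setOf_eq, Complex.ofReal_re]
    linarith [ht.1]
  exact Complex.continuous_re.comp_continuousOn
    (hc.comp Complex.continuous_ofReal.continuousOn hmap)

set_option maxHeartbeats 1600000 in
theorem whittaker_uniform_bounds (y₀ : ℝ) (hy₀ : 0 < y₀) :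
    ∃ A C : ℝ, 0 < A ∧ 0 < C ∧
      ∀ n : ℕ, 1 ≤ n → ∀ y : ℝ, y₀ ≤ y → ∀ s ∈ Set.Icc (3 / 4 : ℝ) 1,
        |(Real.pi * n * y / 6) ^ (-(1 / 4) : ℝ) * Wfun (Real.pi * n * y / 6) s| ≤
            C * (n : ℝ) ^ A * Real.exp (-(Real.pi * n * y / 12)) ∧
        |deriv (fun s' : ℝ =>
            (Real.pi * n * y / 6) ^ (-(1 / 4) : ℝ) * Wfun (Real.pi * n * y / 6) s') s| ≤
          C * (n : ℝ) ^ A * Real.exp (-(Real.pi * n * y / 12)) := by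
  have hπ := Real.pi_pos
  set x₀ : ℝ := Real.pi * y₀ / 6 with hx₀def
  have hx₀ : 0 < x₀ := by positivity
  set B : ℝ := ∫ u in Ioi (0:ℝ), bfun x₀ u with hBdef
  have hB0 : 0 ≤ B := by
    apply setIntegral_nonneg measurableSet_Ioi
    intro u hu
    have hu' : (0:ℝ) < u := hu
    unfold bfun
    positivity
  -- minimum of Gamma on [1/2, 3/4]
  have hΓcont : ContinuousOn Real.Gamma (Icc (1/2 : ℝ) (3/4)) := by
    intro t ht
    have ht' : (0:ℝ) < t := by linarith [ht.1]
    exact ((aux_gamma_hasDerivAt ht').differentiableAt.continuousAt).continuousWithinAt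
  obtain ⟨t₀, ht₀, hmin⟩ := isCompact_Icc.exists_isMinOn
    (⟨1/2, by norm_num, by norm_num⟩ : (Icc (1/2 : ℝ) (3/4)).Nonempty) hΓcont
  set m : ℝ := Real.Gamma t₀ with hmdef
  have hm : 0 < m := Real.Gamma_pos_of_pos (by linarith [ht₀.1])
  have hmΓ : ∀ s ∈ Icc (3/4 : ℝ) 1, m ≤ Real.Gamma (s - 1/4) := by
    intro s hs
    exact hmin ⟨by linarith [hs.1], by linarith [hs.2]⟩
  -- bound on derivative of Gamma
  obtain ⟨M, hM⟩ := isCompact_Icc.exists_bound_of_continuousOn aux_gammaDeriv_continuousOn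
  have hM0 : 0 ≤ M := le_trans (norm_nonneg _) (hM (1/2) ⟨by norm_num, by norm_num⟩)
  set C : ℝ := B/m + (M/m^2 * B + 1/m * B) + 1 with hCdef
  have hC : 0 < C := by
    have h1 : 0 ≤ B/m := div_nonneg hB0 hm.le
    have h2 : 0 ≤ M/m^2 * B := mul_nonneg (div_nonneg hM0 (sq_nonneg m)) hB0
    have h3 : 0 ≤ 1/m * B := mul_nonneg (by positivity) hB0
    rw [hCdef]
    linarith
  refine ⟨1, C, one_pos, hC, ?_⟩
  intro n hn y hy s hs
  have hn1 : (1:ℝ) ≤ (n:ℝ) := by exact_mod_cast hn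
  have hn1' : (1:ℝ) ≤ (n:ℝ) ^ (1:ℝ) := by rw [Real.rpow_one]; exact hn1
  set x : ℝ := Real.pi * n * y / 6 with hxdef
  have hyx : x₀ ≤ x := by
    rw [hx₀def, hxdef]
    have hyy : y₀ ≤ (n:ℝ) * y := by nlinarith
    gcongr
    nlinarith
  have hxpos : 0 < x := hx₀.trans_le hyx
  have hexp : Real.exp (-(Real.pi * n * y / 12)) = Real.exp (-x/2) := by
    rw [hxdef]; ring_nf
  have hexppos := Real.exp_pos (-x/2)
  obtain ⟨hJd, hJb, hJlb⟩ := aux_J hx₀ hyx hs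
  have hsΓpos : 0 < Real.Gamma (s - 1/4) := Real.Gamma_pos_of_pos (by linarith [hs.1])
  have hΓle : (Real.Gamma (s - 1/4))⁻¹ ≤ 1/m := by
    simpa [one_div] using inv_anti₀ hm (hmΓ s hs)
  have hΓinvpos : 0 < (Real.Gamma (s - 1/4))⁻¹ := inv_pos.mpr hsΓpos
  have hCB : C * Real.exp (-x/2) ≤ C * (n:ℝ) ^ (1:ℝ) * Real.exp (-x/2) :=
    mul_le_mul_of_nonneg_right (le_mul_of_one_le_right hC.le hn1') hexppos.le
  constructor
  · -- value bound
    rw [Wfun_repr hxpos s, hexp, abs_mul, abs_of_pos hexppos, abs_mul,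
      abs_of_pos hΓinvpos]
    have h1 : (Real.Gamma (s - 1/4))⁻¹ * |Jfun x s| ≤ 1/m * B :=
      mul_le_mul hΓle hJb (abs_nonneg _) (by positivity)
    have h2 : Real.exp (-x/2) * ((Real.Gamma (s - 1/4))⁻¹ * |Jfun x s|)
        ≤ Real.exp (-x/2) * (1/m * B) := mul_le_mul_of_nonneg_left h1 hexppos.le
    have h3 : 1/m * B ≤ C := by
      have e1 : 0 ≤ B/m := div_nonneg hB0 hm.le
      have e2 : 0 ≤ M/m^2 * B := mul_nonneg (div_nonneg hM0 (sq_nonneg m)) hB0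
      rw [hCdef]
      linarith
    have h4 := mul_le_mul_of_nonneg_left h3 hexppos.le
    linarith
  · -- derivative bound
    have hfun : (fun s' : ℝ => x ^ (-(1/4) : ℝ) * Wfun x s')
        = fun s' : ℝ => Real.exp (-x/2) * ((Real.Gamma (s' - 1/4))⁻¹ * Jfun x s') :=
      funext fun s' => Wfun_repr hxpos s'
    have hΓd : HasDerivAt (fun s' : ℝ => Real.Gamma (s' - 1/4))
        ((deriv Complex.Gamma (((s - 1/4 : ℝ)) : ℂ)).re) s := by
      have hpos : (0:ℝ) < s - 1/4 := by linarith [hs.1]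
      have := (aux_gamma_hasDerivAt hpos).comp s ((hasDerivAt_id s).sub_const (1/4))
      simpa [Function.comp_def] using this
    set G' : ℝ := (deriv Complex.Gamma (((s - 1/4 : ℝ)) : ℂ)).re with hG'def
    have hGinv : HasDerivAt (fun s' : ℝ => (Real.Gamma (s' - 1/4))⁻¹)
        (-G' / Real.Gamma (s - 1/4) ^ 2) s := hΓd.inv hsΓpos.ne'
    have hprod := hGinv.mul hJd
    have hfull := hprod.const_mul (Real.exp (-x/2))
    have hderiv : deriv (fun s' : ℝ => x ^ (-(1/4) : ℝ) * Wfun x s') s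
        = Real.exp (-x/2) * (-G' / Real.Gamma (s - 1/4) ^ 2 * Jfun x s
            + (Real.Gamma (s - 1/4))⁻¹ * Jlog x s) := by
      rw [hfun]
      exact hfull.deriv
    rw [hexp, hderiv, abs_mul, abs_of_pos hexppos]
    have hGM : |G'| ≤ M := by
      have := hM (s - 1/4) ⟨by linarith [hs.1], by linarith [hs.2]⟩
      rwa [Real.norm_eq_abs] at this
    have hm2 : m^2 ≤ Real.Gamma (s - 1/4) ^ 2 := by
      have := hmΓ s hs
      nlinarith
    have habs1 : |-G' / Real.Gamma (s - 1/4) ^ 2| ≤ M / m^2 := by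
      rw [abs_div, abs_neg]
      have hpos2 : (0:ℝ) < m^2 := by positivity
      have h2' : |Real.Gamma (s - 1/4) ^ 2| = Real.Gamma (s - 1/4) ^ 2 :=
        abs_of_pos (by positivity)
      rw [h2']
      exact div_le_div₀ hM0 hGM hpos2 hm2
    have hsum : |(-G' / Real.Gamma (s - 1/4) ^ 2 * Jfun x s
        + (Real.Gamma (s - 1/4))⁻¹ * Jlog x s)| ≤ M/m^2 * B + 1/m * B := by
      calc |(-G' / Real.Gamma (s - 1/4) ^ 2 * Jfun x s
          + (Real.Gamma (s - 1/4))⁻¹ * Jlog x s)|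
          ≤ |(-G' / Real.Gamma (s - 1/4) ^ 2 * Jfun x s)|
            + |(Real.Gamma (s - 1/4))⁻¹ * Jlog x s| := abs_add_le _ _
        _ ≤ M/m^2 * B + 1/m * B := by
            rw [abs_mul, abs_mul, abs_of_pos hΓinvpos]
            have e1 : |(-G' / Real.Gamma (s - 1/4) ^ 2)| * |Jfun x s| ≤ M/m^2 * B :=
              mul_le_mul habs1 hJb (abs_nonneg _) (by positivity)
            have e2 : (Real.Gamma (s - 1/4))⁻¹ * |Jlog x s| ≤ 1/m * B :=
              mul_le_mul hΓle hJlb (abs_nonneg _) (by positivity)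
            linarith
    have h3 : M/m^2 * B + 1/m * B ≤ C := by
      have e1 : 0 ≤ B/m := div_nonneg hB0 hm.le
      rw [hCdef]
      linarith
    have f1 := mul_le_mul_of_nonneg_left hsum hexppos.le
    have f2 := mul_le_mul_of_nonneg_left h3 hexppos.le
    linarith
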